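/- Let φ, θ ∈ ℝ with |φ| < 1, let c > 0, and let s ∈ ℂ with Im s > 0; assume c·s·θ − φ ≠ 0 and θ ≠ 0. Set α = (c s(1+θ²) + 1 + φ²)/(c s θ − φ) and ε(α) = sgn(Im α), and let √· denote the complex square root with nonnegative imaginary part. Then the contour integral I = (1/(2πi)) ∮_{|ξ|=1} [c s + |(1 − φξ)/(1 + θξ)|²]^{-1} dξ/ξ, where for ξ on the unit circle |(1−φξ)/(1+θξ)|² means (1−φξ)(1−φξ̄)/((1+θξ)(1+θξ̄)) with ξ̄ = 1/ξ, equals I = [θ/(csθ − φ)] · { 1 − [(φ+θ)(1+φθ)/(θ(csθ − φ))] · ε(α)/√(α² − 4) }. -/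

import Mathlib

open MeasureTheory Complex Real Filter Topology Metric

/-- The complex square root with nonnegative imaginary part. -/
noncomputable def sqrtIm (z : ℂ) : ℂ :=
  if 0 ≤ (z ^ (1 / 2 : ℂ)).im then z ^ (1 / 2 : ℂ) else -(z ^ (1 / 2 : ℂ))

lemma sqrtIm_sq (z : ℂ) : sqrtIm z ^ 2 = z := by
  have h : (z ^ (1 / 2 : ℂ)) ^ 2 = z := by
    have h2 := Complex.cpow_nat_inv_pow z (two_ne_zero)
    norm_num at h2
    simpa [one_div] using h2
  unfold sqrtIm
  split
  · exact h
  · rw [neg_sq]; exact h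

lemma sqrtIm_im_nonneg (z : ℂ) : 0 ≤ (sqrtIm z).im := by
  unfold sqrtIm
  split
  · assumption
  · next h =>
    push_neg at h
    simp only [neg_im]
    linarith

lemma circleIntegral_congr_off_countable {f g : ℂ → ℂ} (c : ℂ) {R : ℝ} (hR : R ≠ 0) {S : Set ℂ}
    (hS : S.Countable) (h : ∀ z ∉ S, f z = g z) :
    (∮ z in C(c, R), f z) = ∮ z in C(c, R), g z := by
  refine intervalIntegral.integral_congr_ae (((hS.preimage_circleMap c hR).ae_notMem _).mono
    fun θ hθ _ => ?_)
  change circleMap c R θ ∉ S at hθ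
  simp only [h _ hθ]

lemma circleIntegral_inv_of_one_lt_abs {w : ℂ} (hw : 1 < ‖w‖) :
    (∮ z in C(0, 1), (z - w)⁻¹) = 0 := by
  have hne : ∀ z ∈ closedBall (0:ℂ) 1, z - w ≠ 0 := by
    intro z hz
    rw [mem_closedBall, dist_zero_right] at hz
    intro hzw
    rw [sub_eq_zero] at hzw
    subst hzw
    exact absurd hz (by simpa using not_le.2 hw)
  refine Complex.circleIntegral_eq_zero_of_differentiable_on_off_countable zero_le_one
    Set.countable_empty ?_ ?_
  · exact ContinuousOn.inv₀ (by fun_prop) hne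
  · intro z hz
    exact (differentiableAt_id.sub_const _).inv (hne z (ball_subset_closedBall hz.1))

lemma circleIntegrable_const_mul {f : ℂ → ℂ} {c : ℂ} {R : ℝ} (hf : CircleIntegrable f c R)
    (a : ℂ) : CircleIntegrable (fun z => a * f z) c R :=
  IntervalIntegrable.const_mul hf a

lemma circleIntegral_add' {f g : ℂ → ℂ} {c : ℂ} {R : ℝ} (hf : CircleIntegrable f c R)
    (hg : CircleIntegrable g c R) :
    (∮ z in C(c, R), (f z + g z)) = (∮ z in C(c, R), f z) + ∮ z in C(c, R), g z := by
  simp only [circleIntegral, smul_add]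
  exact intervalIntegral.integral_add hf.out hg.out

lemma key_pointwise (cs φC θC k α r₁ r₂ A B C : ℂ) (hk : k ≠ 0)
    (hkdef : k = cs*θC - φC) (hkα : k*α = cs*(1+θC^2) + 1 + φC^2)
    (hsum : r₁ + r₂ = -α) (hprod : r₁*r₂ = 1)
    (hA : A * k = θC)
    (hB : B * (k * r₁ * (r₁ - r₂)) = (1+θC*r₁)*(r₁+θC))
    (hC : C * (k * r₂ * (r₂ - r₁)) = (1+θC*r₂)*(r₂+θC))
    (ξ : ℂ) (hξ0 : ξ ≠ 0) (h1 : 1 + θC*ξ ≠ 0) (h2 : ξ + θC ≠ 0)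
    (hξ1 : ξ ≠ r₁) (hξ2 : ξ ≠ r₂) (h12 : r₁ ≠ r₂) :
    (cs + ((1 - φC*ξ)*(1 - φC*ξ⁻¹))/((1+θC*ξ)*(1+θC*ξ⁻¹)))⁻¹ * ξ⁻¹
      = A * (ξ - 0)⁻¹ + B * (ξ - r₁)⁻¹ + C * (ξ - r₂)⁻¹ := by
  have hr₁0 : r₁ ≠ 0 := by intro h; rw [h, zero_mul] at hprod; exact zero_ne_one hprod
  have hr₂0 : r₂ ≠ 0 := by intro h; rw [h, mul_zero] at hprod; exact zero_ne_one hprod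
  have h2' : 1 + θC*ξ⁻¹ ≠ 0 := by
    have : 1 + θC*ξ⁻¹ = (ξ + θC) * ξ⁻¹ := by field_simp
    rw [this]
    exact mul_ne_zero h2 (inv_ne_zero hξ0)
  have hM : (1+θC*ξ)*(1+θC*ξ⁻¹) ≠ 0 := mul_ne_zero h1 h2'
  have hξ1' : ξ - r₁ ≠ 0 := sub_ne_zero.2 hξ1
  have hξ2' : ξ - r₂ ≠ 0 := sub_ne_zero.2 hξ2
  have h12' : r₁ - r₂ ≠ 0 := sub_ne_zero.2 h12
  have h21' : r₂ - r₁ ≠ 0 := sub_ne_zero.2 (Ne.symm h12)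
  have hQpoly : cs*((1+θC*ξ)*(ξ+θC)) + (1-φC*ξ)*(ξ-φC) = k*(ξ-r₁)*(ξ-r₂) := by
    linear_combination (-(ξ^2+1)) * hkdef + (-ξ) * hkα + (k*ξ) * hsum + (-k) * hprod
  have hsum_eq : cs + ((1 - φC*ξ)*(1 - φC*ξ⁻¹))/((1+θC*ξ)*(1+θC*ξ⁻¹))
      = (k*(ξ-r₁)*(ξ-r₂)) / (ξ * ((1+θC*ξ)*(1+θC*ξ⁻¹))) := by
    rw [eq_div_iff (mul_ne_zero hξ0 hM)]
    have hinv : ξ*ξ⁻¹ = 1 := mul_inv_cancel₀ hξ0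
    have hD : ((1 - φC*ξ)*(1 - φC*ξ⁻¹))/((1+θC*ξ)*(1+θC*ξ⁻¹)) * ((1+θC*ξ)*(1+θC*ξ⁻¹))
        = (1 - φC*ξ)*(1 - φC*ξ⁻¹) := div_mul_cancel₀ _ hM
    linear_combination ξ * hD + hQpoly + (cs*(1+θC*ξ)*θC - (1-φC*ξ)*φC) * hinv
  rw [hsum_eq, inv_div, sub_zero]
  have hDL : k*ξ*(ξ-r₁)*(ξ-r₂) ≠ 0 := by apply_rules [mul_ne_zero]
  have hDR : ξ*(ξ-r₁)*(ξ-r₂) ≠ 0 := by apply_rules [mul_ne_zero]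
  have hrr : r₁*r₂*(r₁-r₂) ≠ 0 := by apply_rules [mul_ne_zero]
  have L1 : (ξ * ((1+θC*ξ)*(1+θC*ξ⁻¹))) / (k*(ξ-r₁)*(ξ-r₂)) * ξ⁻¹
      = ((1+θC*ξ)*(ξ+θC)) / (k*ξ*(ξ-r₁)*(ξ-r₂)) := by
    field_simp
  have R1 : A * ξ⁻¹ + B * (ξ-r₁)⁻¹ + C * (ξ-r₂)⁻¹
      = (A*(ξ-r₁)*(ξ-r₂) + B*ξ*(ξ-r₂) + C*ξ*(ξ-r₁)) / (ξ*(ξ-r₁)*(ξ-r₂)) := by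
    field_simp
  rw [L1, R1]
  apply mul_right_cancel₀ hrr
  rw [div_mul_eq_mul_div, div_mul_eq_mul_div, div_eq_div_iff hDL hDR]
  linear_combination (-(ξ*(ξ-r₁)^2*(ξ-r₂)^2*r₁*r₂*(r₁-r₂))) * hA - (ξ^2*(ξ-r₁)*(ξ-r₂)^2*r₂) * hB + (ξ^2*(ξ-r₁)^2*(ξ-r₂)*r₁) * hC - (θC*ξ*(ξ-r₁)^2*(ξ-r₂)^2*(r₁-r₂)) * hprod

lemma alpha_im_eq (φ θ c : ℝ) (s k α : ℂ) (hden : k ≠ 0) (hk : k = (c:ℂ)*s*θ - φ)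
    (hα : α = ((c:ℂ)*s*(1+(θ:ℂ)^2) + 1 + (φ:ℂ)^2) / k) :
    α.im * Complex.normSq k = -(c * s.im * ((φ+θ)*(1+φ*θ))) := by
  have hmul : α * k = (c:ℂ)*s*(1+(θ:ℂ)^2) + 1 + (φ:ℂ)^2 := by
    rw [hα, div_mul_cancel₀ _ hden]
  have h1 : α.im * Complex.normSq k = ((α * k) * (starRingEnd ℂ) k).im := by
    rw [mul_assoc, Complex.mul_conj]
    simp [Complex.mul_im]
  rw [h1, hmul, hk]
  simp [Complex.mul_im, Complex.mul_re, pow_two]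
  ring

lemma root_inside (α w : ℂ) (hb : α.im ≠ 0) (hw2 : w^2 = α^2 - 4) (hv : 0 < w.im) :
    ‖(-α + ((Real.sign α.im : ℝ):ℂ) * w)/2‖ < 1 ∧
      1 < ‖(-α - ((Real.sign α.im : ℝ):ℂ) * w)/2‖ := by
  set a := α.re with ha
  set b := α.im with hbdef
  set u := w.re with hu
  set v := w.im with hvdef
  set e := Real.sign b with he
  have hα' : (a:ℂ) + (b:ℂ)*Complex.I = α := Complex.re_add_im α
  have hw' : (u:ℂ) + (v:ℂ)*Complex.I = w := Complex.re_add_im w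
  have huv : u*v = a*b := by
    have h := congrArg Complex.im hw2
    simp [pow_two, Complex.mul_im, Complex.sub_im] at h
    linarith
  have hee : e = 1 ∨ e = -1 := by
    rcases lt_or_gt_of_ne hb with h | h
    · right; rw [he, hbdef]; exact Real.sign_of_neg h
    · left; rw [he, hbdef]; exact Real.sign_of_pos h
  have h1 : -α + ((e:ℝ):ℂ)*w = ((e*u-a:ℝ):ℂ) + ((e*v-b:ℝ):ℂ)*Complex.I := by
    rw [← hα', ← hw']; push_cast; ring
  have h2 : -α - ((e:ℝ):ℂ)*w = ((-(e*u)-a:ℝ):ℂ) + ((-(e*v)-b:ℝ):ℂ)*Complex.I := by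
    rw [← hα', ← hw']; push_cast; ring
  have hX : Complex.normSq (-α + ((e:ℝ):ℂ)*w) = (e*u-a)^2 + (e*v-b)^2 := by
    rw [h1, Complex.normSq_add_mul_I]
  have hY : Complex.normSq (-α - ((e:ℝ):ℂ)*w) = (-(e*u)-a)^2 + (-(e*v)-b)^2 := by
    rw [h2, Complex.normSq_add_mul_I]
  have hprod4 : ((-α + ((e:ℝ):ℂ)*w) * (-α - ((e:ℝ):ℂ)*w)) = ((4:ℝ):ℂ) := by
    have he2 : ((e:ℝ):ℂ)^2 = 1 := by
      rcases hee with h | h <;> rw [h] <;> norm_num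
    push_cast
    linear_combination (-(((e:ℝ):ℂ)^2)) * hw2 + (4 - α^2) * he2
  have hXY : Complex.normSq (-α + ((e:ℝ):ℂ)*w) * Complex.normSq (-α - ((e:ℝ):ℂ)*w) = 16 := by
    rw [← map_mul, hprod4]
    simp [Complex.normSq_ofReal]
    norm_num
  have hlt : Complex.normSq (-α + ((e:ℝ):ℂ)*w) < Complex.normSq (-α - ((e:ℝ):ℂ)*w) := by
    rw [hX, hY]
    have huva : u*a*v = a^2*b := by rw [show u*a*v = (u*v)*a by ring, huv]; ring
    rcases lt_or_gt_of_ne hb with h | h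
    · have he1 : e = -1 := by rw [he, hbdef]; exact Real.sign_of_neg h
      rw [he1]; nlinarith [huva, sq_nonneg a, sq_nonneg v, mul_pos hv (neg_pos.2 h), hv]
    · have he1 : e = 1 := by rw [he, hbdef]; exact Real.sign_of_pos h
      rw [he1]; nlinarith [huva, sq_nonneg a, sq_nonneg v, mul_pos hv h, hv]
  have hX4 : Complex.normSq (-α + ((e:ℝ):ℂ)*w) < 4 := by
    nlinarith [Complex.normSq_nonneg (-α + ((e:ℝ):ℂ)*w), Complex.normSq_nonneg (-α - ((e:ℝ):ℂ)*w)]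
  have hY4 : 4 < Complex.normSq (-α - ((e:ℝ):ℂ)*w) := by
    nlinarith [Complex.normSq_nonneg (-α + ((e:ℝ):ℂ)*w), Complex.normSq_nonneg (-α - ((e:ℝ):ℂ)*w)]
  constructor
  · have hns : Complex.normSq ((-α + ((e:ℝ):ℂ)*w)/2) < 1 := by
      rw [Complex.normSq_div]
      have h4 : Complex.normSq (2:ℂ) = 4 := by norm_num [Complex.normSq_apply]
      rw [h4]; linarith
    have hsq := Complex.sq_norm ((-α + ((e:ℝ):ℂ)*w)/2)
    nlinarith [norm_nonneg ((-α + ((e:ℝ):ℂ)*w)/2)]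
  · have hns : 1 < Complex.normSq ((-α - ((e:ℝ):ℂ)*w)/2) := by
      rw [Complex.normSq_div]
      have h4 : Complex.normSq (2:ℂ) = 4 := by norm_num [Complex.normSq_apply]
      rw [h4]; linarith
    have hsq := Complex.sq_norm ((-α - ((e:ℝ):ℂ)*w)/2)
    nlinarith [norm_nonneg ((-α - ((e:ℝ):ℂ)*w)/2)]

lemma sqrtIm_im_pos (α : ℂ) (hb : α.im ≠ 0) : 0 < (sqrtIm (α^2 - 4)).im := by
  rcases (sqrtIm_im_nonneg (α^2-4)).lt_or_eq with h | h
  · exact h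
  · exfalso
    have hw2 : (sqrtIm (α^2-4))^2 = α^2-4 := sqrtIm_sq _
    set w := sqrtIm (α^2-4) with hwdef
    have him := congrArg Complex.im hw2
    have hre := congrArg Complex.re hw2
    simp [pow_two, Complex.mul_im, Complex.mul_re, Complex.sub_im, Complex.sub_re] at him hre
    rw [← h] at him hre
    have hre0 : α.re = 0 := by
      have h2 : α.re * α.im = 0 := by linarith
      rcases mul_eq_zero.1 h2 with h3 | h3
      · exact h3
      · exact absurd h3 hb
    have hb2 : 0 < α.im^2 := lt_of_le_of_ne (sq_nonneg _) (Ne.symm (pow_ne_zero 2 hb))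
    nlinarith [sq_nonneg w.re]

/-- Evaluation of the contour integral `I` for an ARMA(1,1) process (Equation (7)). -/
theorem arma_contour_integral
    (φ θ c : ℝ) (hφ : |φ| < 1) (hθ : θ ≠ 0) (hc : 0 < c)
    (s : ℂ) (hs : 0 < s.im)
    (hden : (c : ℂ) * s * (θ : ℂ) - (φ : ℂ) ≠ 0)
    (α : ℂ)
    (hα : α = ((c : ℂ) * s * (1 + (θ : ℂ) ^ 2) + 1 + (φ : ℂ) ^ 2) /
        ((c : ℂ) * s * (θ : ℂ) - (φ : ℂ))) :
    (2 * π * Complex.I)⁻¹ *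
      (∮ ξ in C(0, 1),
        ((c : ℂ) * s +
            ((1 - (φ : ℂ) * ξ) * (1 - (φ : ℂ) * ξ⁻¹)) /
              ((1 + (θ : ℂ) * ξ) * (1 + (θ : ℂ) * ξ⁻¹)))⁻¹ * ξ⁻¹)
      = ((θ : ℂ) / ((c : ℂ) * s * (θ : ℂ) - (φ : ℂ))) *
        (1 - (((φ : ℂ) + (θ : ℂ)) * (1 + (φ : ℂ) * (θ : ℂ)) /
            ((θ : ℂ) * ((c : ℂ) * s * (θ : ℂ) - (φ : ℂ)))) *
          (((Real.sign α.im : ℝ) : ℂ) / sqrtIm (α ^ 2 - 4))) := by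
  have hθC : (θ:ℂ) ≠ 0 := Complex.ofReal_ne_zero.2 hθ
  have h2piI : (2 * ↑π * Complex.I : ℂ) ≠ 0 := Complex.two_pi_I_ne_zero
  have hsim : s.im ≠ 0 := hs.ne'
  set K : ℂ := (c:ℂ)*s*(θ:ℂ) - (φ:ℂ) with hK
  have hkim : α.im * Complex.normSq K = -(c * s.im * ((φ+θ)*(1+φ*θ))) :=
    alpha_im_eq φ θ c s K α hden hK hα
  have hinv0 : (∮ ξ in C(0,1), ξ⁻¹) = 2 * ↑π * Complex.I := by
    have := circleIntegral.integral_sub_inv_of_mem_ball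
      (show (0:ℂ) ∈ Metric.ball (0:ℂ) 1 by simp)
    simpa using this
  by_cases hP : (φ+θ)*(1+φ*θ) = 0
  · -- degenerate case
    have hbim : α.im = 0 := by
      have hns : Complex.normSq K ≠ 0 := by
        simpa using (Complex.normSq_pos.2 hden).ne'
      rw [hP] at hkim
      simp at hkim
      rcases hkim with h | h
      · exact h
      · exact absurd h (by simpa using hden)
    have hrhs : (((Real.sign α.im : ℝ)):ℂ) = 0 := by
      rw [hbim, Real.sign_zero]; norm_num
    rw [hrhs, zero_div, mul_zero, sub_zero, mul_one]
    rcases mul_eq_zero.1 hP with h1 | h2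
    · -- θ = -φ
      have hth : (θ:ℂ) = -(φ:ℂ) := by
        have h1' : (φ:ℂ) + (θ:ℂ) = 0 := by exact_mod_cast congrArg (Complex.ofReal) h1
        linear_combination h1'
      have hφ0 : (φ:ℂ) ≠ 0 := by
        intro h; rw [h, neg_zero] at hth; exact hθC hth
      have hcs1 : (c:ℂ)*s + 1 ≠ 0 := by
        intro h
        have h' := congrArg Complex.im h
        simp [Complex.add_im, Complex.mul_im] at h'
        rcases h' with h' | h'
        · exact absurd h' hc.ne'
        · exact absurd h' hsim
      have hEq : Set.EqOn
          (fun ξ : ℂ => ((c : ℂ) * s +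
            ((1 - (φ : ℂ) * ξ) * (1 - (φ : ℂ) * ξ⁻¹)) /
              ((1 + (θ : ℂ) * ξ) * (1 + (θ : ℂ) * ξ⁻¹)))⁻¹ * ξ⁻¹)
          (fun ξ : ℂ => ((c:ℂ)*s + 1)⁻¹ * ξ⁻¹) (Metric.sphere (0:ℂ) 1) := by
        intro ξ hξ
        have habs : ‖ξ‖ = 1 := by simpa [Complex.dist_eq] using hξ
        have h1m : 1 - (φ:ℂ)*ξ ≠ 0 := by
          intro h
          have h' : (φ:ℂ)*ξ = 1 := by linear_combination -h
          have h'' := congrArg norm h'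
          simp [norm_mul, habs, Complex.norm_real] at h''
          rw [h''] at hφ
          exact absurd hφ (lt_irrefl _)
        have habsinv : ‖ξ⁻¹‖ = 1 := by rw [norm_inv, habs]; norm_num
        have h2m : 1 - (φ:ℂ)*ξ⁻¹ ≠ 0 := by
          intro h
          have h' : (φ:ℂ)*ξ⁻¹ = 1 := by linear_combination -h
          have h'' := congrArg norm h'
          simp [norm_mul, habsinv, Complex.norm_real] at h''
          rw [h''] at hφ
          exact absurd hφ (lt_irrefl _)
        have hm : ((1 - (φ:ℂ)*ξ) * (1 - (φ:ℂ)*ξ⁻¹)) /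
            ((1 + (θ:ℂ)*ξ) * (1 + (θ:ℂ)*ξ⁻¹)) = 1 := by
          rw [hth, show (1 + -(φ:ℂ)*ξ) = 1 - (φ:ℂ)*ξ by ring,
            show (1 + -(φ:ℂ)*ξ⁻¹) = 1 - (φ:ℂ)*ξ⁻¹ by ring]
          exact div_self (mul_ne_zero h1m h2m)
        simp only [hm]
      rw [circleIntegral.integral_congr zero_le_one hEq, circleIntegral.integral_const_mul,
        hinv0]
      rw [mul_comm (((c:ℂ)*s + 1)⁻¹) (2 * ↑π * Complex.I), ← mul_assoc,
        inv_mul_cancel₀ h2piI, one_mul]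
      rw [eq_div_iff hden, hK, inv_mul_eq_iff_eq_mul₀ hcs1]
      linear_combination -hth
    · -- 1 + φθ = 0
      have hφθ : (φ:ℂ)*(θ:ℂ) = -1 := by
        have h2' : (1:ℂ) + (φ:ℂ)*(θ:ℂ) = 0 := by exact_mod_cast congrArg (Complex.ofReal) h2
        linear_combination h2'
      have hφ0 : (φ:ℂ) ≠ 0 := by
        intro h; rw [h, zero_mul] at hφθ; norm_num at hφθ
      have hφr : φ ≠ 0 := fun h => hφ0 (by rw [h]; norm_num)
      have hθabs : 1 < ‖(θ:ℂ)‖ := by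
        have hm1 : |φ| * |θ| = 1 := by
          have hre : φ * θ = -1 := by exact_mod_cast hφθ
          have : |φ * θ| = 1 := by rw [hre]; norm_num
          rwa [abs_mul] at this
        have hφpos : 0 < |φ| := abs_pos.2 hφr
        rw [Complex.norm_real, Real.norm_eq_abs]
        nlinarith [abs_nonneg θ]
      have hcsφ : (c:ℂ)*s + (φ:ℂ)^2 ≠ 0 := by
        intro h
        have him2 : ((c:ℂ)*s + (φ:ℂ)^2).im = c * s.im := by
          simp [Complex.add_im, Complex.mul_im, pow_two, Complex.mul_re]
        rw [h] at him2
        rw [Complex.zero_im] at him2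
        exact (mul_ne_zero hc.ne' hsim) him2.symm
      have hEq : Set.EqOn
          (fun ξ : ℂ => ((c : ℂ) * s +
            ((1 - (φ : ℂ) * ξ) * (1 - (φ : ℂ) * ξ⁻¹)) /
              ((1 + (θ : ℂ) * ξ) * (1 + (θ : ℂ) * ξ⁻¹)))⁻¹ * ξ⁻¹)
          (fun ξ : ℂ => ((c:ℂ)*s + (φ:ℂ)^2)⁻¹ * ξ⁻¹) (Metric.sphere (0:ℂ) 1) := by
        intro ξ hξ
        have habs : ‖ξ‖ = 1 := by simpa [Complex.dist_eq] using hξ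
        have hξ0 : ξ ≠ 0 := by
          intro h; rw [h] at habs; simp at habs
        have h1m : 1 + (θ:ℂ)*ξ ≠ 0 := by
          intro h
          have h' : (θ:ℂ)*ξ = -1 := by linear_combination h
          have h'' := congrArg norm h'
          rw [norm_mul, habs, mul_one] at h''
          simp at h''
          rw [Complex.norm_real, Real.norm_eq_abs, h''] at hθabs
          exact absurd hθabs (lt_irrefl _)
        have habsinv : ‖ξ⁻¹‖ = 1 := by rw [norm_inv, habs]; norm_num
        have h2m : 1 + (θ:ℂ)*ξ⁻¹ ≠ 0 := by
          intro h
          have h' : (θ:ℂ)*ξ⁻¹ = -1 := by linear_combination h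
          have h'' := congrArg norm h'
          rw [norm_mul, habsinv, mul_one] at h''
          simp at h''
          rw [Complex.norm_real, Real.norm_eq_abs, h''] at hθabs
          exact absurd hθabs (lt_irrefl _)
        have hM : (1 + (θ:ℂ)*ξ) * (1 + (θ:ℂ)*ξ⁻¹) ≠ 0 := mul_ne_zero h1m h2m
        have hNM : (1 - (φ:ℂ)*ξ) * (1 - (φ:ℂ)*ξ⁻¹)
            = (φ:ℂ)^2 * ((1 + (θ:ℂ)*ξ) * (1 + (θ:ℂ)*ξ⁻¹)) := by
          field_simp
          linear_combination (-(φ:ℂ) - (φ:ℂ)*ξ^2 + ξ - (φ:ℂ)*(θ:ℂ)*ξ) * hφθ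
        have hm : ((1 - (φ:ℂ)*ξ) * (1 - (φ:ℂ)*ξ⁻¹)) /
            ((1 + (θ:ℂ)*ξ) * (1 + (θ:ℂ)*ξ⁻¹)) = (φ:ℂ)^2 := by
          rw [hNM, mul_div_assoc, div_self hM, mul_one]
        simp only [hm]
      rw [circleIntegral.integral_congr zero_le_one hEq, circleIntegral.integral_const_mul,
        hinv0]
      rw [mul_comm (((c:ℂ)*s + (φ:ℂ)^2)⁻¹) (2 * ↑π * Complex.I), ← mul_assoc,
        inv_mul_cancel₀ h2piI, one_mul]
      rw [eq_div_iff hden, hK, inv_mul_eq_iff_eq_mul₀ hcsφ]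
      linear_combination (-(φ:ℂ)) * hφθ
  · -- main case
    have hbne : α.im ≠ 0 := by
      intro h
      rw [h, zero_mul] at hkim
      have h0 : c * s.im * ((φ+θ)*(1+φ*θ)) = 0 := by linarith
      rcases mul_eq_zero.1 h0 with h' | h'
      · rcases mul_eq_zero.1 h' with h'' | h''
        · exact absurd h'' hc.ne'
        · exact absurd h'' hsim
      · exact hP h'
    set w : ℂ := sqrtIm (α^2 - 4) with hwdef
    have hw2 : w^2 = α^2 - 4 := sqrtIm_sq _
    have hwim : 0 < w.im := sqrtIm_im_pos α hbne
    have hwne : w ≠ 0 := by intro h; rw [h] at hwim; simp at hwim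
    set εC : ℂ := ((Real.sign α.im : ℝ):ℂ) with hεdef
    have hsgn : Real.sign α.im = -1 ∨ Real.sign α.im = 1 :=
      Real.sign_apply_eq_of_ne_zero _ hbne
    have hε2 : εC^2 = 1 := by rcases hsgn with h | h <;> rw [hεdef, h] <;> norm_num
    have hεne : εC ≠ 0 := by rcases hsgn with h | h <;> rw [hεdef, h] <;> norm_num
    obtain ⟨r₁, hr₁⟩ : ∃ x : ℂ, x = (-α + εC*w)/2 := ⟨_, rfl⟩
    obtain ⟨r₂, hr₂⟩ : ∃ x : ℂ, x = (-α - εC*w)/2 := ⟨_, rfl⟩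
    have hsum : r₁ + r₂ = -α := by rw [hr₁, hr₂]; ring
    have hprod : r₁ * r₂ = 1 := by
      rw [hr₁, hr₂]; linear_combination (-(εC^2)/4) * hw2 + (-(α^2-4)/4) * hε2
    have habs := root_inside α w hbne hw2 hwim
    have habs1 : ‖r₁‖ < 1 := by rw [hr₁]; exact habs.1
    have habs2 : 1 < ‖r₂‖ := by rw [hr₂]; exact habs.2
    have h12 : r₁ ≠ r₂ := by
      intro h
      apply mul_ne_zero hεne hwne
      rw [hr₁, hr₂] at h
      linear_combination h
    have hr₁0 : r₁ ≠ 0 := by intro h; rw [h, zero_mul] at hprod; exact zero_ne_one hprod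
    have hr₂0 : r₂ ≠ 0 := by intro h; rw [h, mul_zero] at hprod; exact zero_ne_one hprod
    have h12' : r₁ - r₂ ≠ 0 := sub_ne_zero.2 h12
    have h21' : r₂ - r₁ ≠ 0 := sub_ne_zero.2 (Ne.symm h12)
    have hkα : K*α = (c:ℂ)*s*(1+(θ:ℂ)^2) + 1 + (φ:ℂ)^2 := by
      rw [hα]
      field_simp
    set A : ℂ := (θ:ℂ)/K with hAdef
    set B : ℂ := (1+(θ:ℂ)*r₁)*(r₁+(θ:ℂ)) / (K*r₁*(r₁-r₂)) with hBdef
    set C : ℂ := (1+(θ:ℂ)*r₂)*(r₂+(θ:ℂ)) / (K*r₂*(r₂-r₁)) with hCdef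
    have hA : A * K = (θ:ℂ) := by rw [hAdef]; exact div_mul_cancel₀ _ hden
    have hB : B * (K*r₁*(r₁-r₂)) = (1+(θ:ℂ)*r₁)*(r₁+(θ:ℂ)) := by
      rw [hBdef]; exact div_mul_cancel₀ _ (by apply_rules [mul_ne_zero])
    have hC : C * (K*r₂*(r₂-r₁)) = (1+(θ:ℂ)*r₂)*(r₂+(θ:ℂ)) := by
      rw [hCdef]; exact div_mul_cancel₀ _ (by apply_rules [mul_ne_zero])
    have hcong : (∮ ξ in C(0,1), ((c : ℂ) * s +
            ((1 - (φ : ℂ) * ξ) * (1 - (φ : ℂ) * ξ⁻¹)) /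
              ((1 + (θ : ℂ) * ξ) * (1 + (θ : ℂ) * ξ⁻¹)))⁻¹ * ξ⁻¹)
        = ∮ ξ in C(0,1), (A * (ξ - 0)⁻¹ + B * (ξ - r₁)⁻¹ + C * (ξ - r₂)⁻¹) := by
      apply circleIntegral_congr_off_countable 0 one_ne_zero
        (S := {0, r₁, r₂, -(θ:ℂ)⁻¹, -(θ:ℂ)}) (Set.toFinite _).countable
      intro z hz
      simp only [Set.mem_insert_iff, Set.mem_singleton_iff, not_or] at hz
      obtain ⟨hz0, hz1, hz2, hz3, hz4⟩ := hz
      refine key_pointwise ((c:ℂ)*s) (φ:ℂ) (θ:ℂ) K α r₁ r₂ A B C hden hK hkα hsum hprod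
        hA hB hC z hz0 ?_ ?_ hz1 hz2 h12
      · intro h
        apply hz3
        apply mul_left_cancel₀ hθC
        rw [mul_neg, mul_inv_cancel₀ hθC]
        linear_combination h
      · intro h
        apply hz4
        linear_combination h
    rw [hcong]
    have hs0 : (0:ℂ) ∉ Metric.sphere (0:ℂ) |(1:ℝ)| := by simp
    have hs1 : r₁ ∉ Metric.sphere (0:ℂ) |(1:ℝ)| := by
      intro h
      rw [Metric.mem_sphere, Complex.dist_eq, sub_zero, abs_one] at h
      exact habs1.ne h
    have hs2 : r₂ ∉ Metric.sphere (0:ℂ) |(1:ℝ)| := by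
      intro h
      rw [Metric.mem_sphere, Complex.dist_eq, sub_zero, abs_one] at h
      exact habs2.ne' h
    have hi1 : CircleIntegrable (fun ξ : ℂ => A * (ξ - 0)⁻¹) 0 1 :=
      circleIntegrable_const_mul (circleIntegrable_sub_inv_iff.2 (Or.inr hs0)) A
    have hi2 : CircleIntegrable (fun ξ : ℂ => B * (ξ - r₁)⁻¹) 0 1 :=
      circleIntegrable_const_mul (circleIntegrable_sub_inv_iff.2 (Or.inr hs1)) B
    have hi3 : CircleIntegrable (fun ξ : ℂ => C * (ξ - r₂)⁻¹) 0 1 :=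
      circleIntegrable_const_mul (circleIntegrable_sub_inv_iff.2 (Or.inr hs2)) C
    have hb0 : (0:ℂ) ∈ Metric.ball (0:ℂ) 1 := by simp
    have hb1 : r₁ ∈ Metric.ball (0:ℂ) 1 := by
      rw [Metric.mem_ball, Complex.dist_eq, sub_zero]; exact habs1
    have e1 : (∮ ξ in C(0,1), (A * (ξ - 0)⁻¹ + B * (ξ - r₁)⁻¹ + C * (ξ - r₂)⁻¹))
        = (∮ ξ in C(0,1), (A * (ξ - 0)⁻¹ + B * (ξ - r₁)⁻¹)) + ∮ ξ in C(0,1), C * (ξ - r₂)⁻¹ :=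
      circleIntegral_add' (hi1.add hi2) hi3
    have e2 : (∮ ξ in C(0,1), (A * (ξ - 0)⁻¹ + B * (ξ - r₁)⁻¹))
        = (∮ ξ in C(0,1), A * (ξ - 0)⁻¹) + ∮ ξ in C(0,1), B * (ξ - r₁)⁻¹ :=
      circleIntegral_add' hi1 hi2
    rw [e1, e2,
      circleIntegral.integral_const_mul, circleIntegral.integral_const_mul,
      circleIntegral.integral_const_mul,
      circleIntegral.integral_sub_inv_of_mem_ball hb0,
      circleIntegral.integral_sub_inv_of_mem_ball hb1,
      circleIntegral_inv_of_one_lt_abs habs2]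
    rw [mul_zero, add_zero, ← add_mul, mul_comm (A + B) (2 * ↑π * Complex.I),
      ← mul_assoc, inv_mul_cancel₀ h2piI, one_mul]
    -- final algebra
    have hrd : r₁ - r₂ = εC * w := by rw [hr₁, hr₂]; ring
    have hquad : r₁^2 + α*r₁ + 1 = 0 := by linear_combination r₁ * hsum - hprod
    have hPk : K*(1+(θ:ℂ)^2) - (θ:ℂ)*(K*α) = -(((φ:ℂ)+(θ:ℂ))*(1+(φ:ℂ)*(θ:ℂ))) := by
      linear_combination (1+(θ:ℂ)^2) * hK + (-(θ:ℂ)) * hkα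
    have hBval : B = -(εC*(((φ:ℂ)+(θ:ℂ))*(1+(φ:ℂ)*(θ:ℂ)))) / (K^2*w) := by
      rw [eq_div_iff (mul_ne_zero (pow_ne_zero 2 hden) hwne)]
      apply mul_right_cancel₀ hr₁0
      linear_combination (εC*K) * hB + (-(B*K^2*r₁*εC)) * hrd + (-(B*K^2*r₁*w)) * hε2
        + (εC*K*(θ:ℂ)) * hquad + (εC*r₁) * hPk
    rw [hBval, hAdef]
    field_simp
    ring
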